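/- Let γ, E₁, E₂, z ∈ ℝ³, and suppose z does not lie on the closed segment joining γ and E₂. Let c be a real number with c > 1, set z̃ := c(z−γ) + γ, and assume the equal travel-time condition ‖z−γ‖ + ‖z−E₂‖ = ‖z̃−γ‖ + ‖z̃−E₁‖. Then ‖z̃−E₂‖ > ‖z̃−E₁‖; that is, the displaced artifact z̃ lies on the same side of the plane of points equidistant from E₁ and E₂ as a point satisfying ‖z−E₂‖ > ‖z−E₁‖. -/

import Mathlib

theorem stmt_8 (γ E₁ E₂ z : EuclideanSpace ℝ (Fin 3))
    (hz : z ∉ segment ℝ γ E₂)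
    (c : ℝ) (hc1 : 1 < c)
    (z' : EuclideanSpace ℝ (Fin 3)) (hz' : z' = c • (z - γ) + γ)
    (ht : ‖z - γ‖ + ‖z - E₂‖ = ‖z' - γ‖ + ‖z' - E₁‖) :
    ‖z' - E₂‖ > ‖z' - E₁‖ := by
  have hc0 : (0:ℝ) < c := by linarith
  have hzγ : z ≠ γ := by
    intro h
    apply hz; rw [h]; exact left_mem_segment ℝ γ E₂
  have hv : z - γ ≠ 0 := sub_ne_zero.mpr hzγ
  have hnv : 0 < ‖z - γ‖ := norm_pos_iff.mpr hv
  have h1 : ‖z' - γ‖ = c * ‖z - γ‖ := by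
    rw [hz']
    simp [norm_smul, abs_of_pos hc0]
  have hzz' : z' - z = (c - 1) • (z - γ) := by
    rw [hz']; module
  have h2 : ‖z' - z‖ = (c - 1) * ‖z - γ‖ := by
    rw [hzz', norm_smul, Real.norm_eq_abs, abs_of_pos (by linarith)]
  have hE1 : ‖z' - E₁‖ = ‖z - E₂‖ - (c - 1) * ‖z - γ‖ := by linarith
  have htri : dist z E₂ < dist z z' + dist z' E₂ := by
    rcases lt_or_eq_of_le (dist_triangle z z' E₂) with h | h
    · exact h
    · exfalso
      have hseg : z' ∈ segment ℝ z E₂ := (dist_add_dist_eq_iff.mp h.symm).mem_segment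
      obtain ⟨a, b, ha, hb, hab, heq⟩ := hseg
      -- z' = a • z + b • E₂, also z' = z + (c-1) • (z - γ)
      have hb0 : b ≠ 0 := by
        rintro rfl
        have : z' = z := by
          rw [← heq]
          have : a = 1 := by linarith
          simp [this]
        rw [this] at hzz'
        have : (c - 1) • (z - γ) = 0 := by
          rw [← hzz']; simp
        rcases smul_eq_zero.mp this with h' | h'
        · linarith
        · exact hv h'
      have hbpos : 0 < b := lt_of_le_of_ne hb (Ne.symm hb0)
      -- (c-1) • (z - γ) = b • (E₂ - z)
      have key : (c - 1) • (z - γ) = b • (E₂ - z) := by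
        have := heq
        rw [← hzz'] at *
        have ha' : a = 1 - b := by linarith
        rw [ha'] at heq
        have : z' - z = b • (E₂ - z) := by
          rw [← heq]; module
        rw [hzz'] at this
        exact this
      set t : ℝ := (c - 1) / b with ht'
      have htpos : 0 < t := div_pos (by linarith) hbpos
      have hE2 : E₂ - z = t • (z - γ) := by
        have : b • (E₂ - z) = b • (t • (z - γ)) := by
          rw [smul_smul]
          have hbt : b * t = c - 1 := by rw [ht', mul_comm]; exact div_mul_cancel₀ _ hb0
          rw [hbt, ← key]
        exact smul_right_injective _ hb0 this
      apply hz
      refine ⟨t / (1 + t), 1 / (1 + t), by positivity, by positivity, ?_, ?_⟩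
      · field_simp
        ring
      · have h1t : (1 + t) ≠ 0 := by positivity
        have : (1 + t) • z = t • γ + E₂ := by
          have hE2' : E₂ = z + t • (z - γ) := by
            rw [← hE2]; abel
          rw [hE2']
          module
        have := congrArg (fun x => (1 / (1 + t)) • x) this
        simp only [smul_smul, one_div, inv_mul_cancel₀ h1t, one_smul] at this
        rw [this]
        module
  have : ‖z - E₂‖ < ‖z - z'‖ + ‖z' - E₂‖ := by
    simpa [dist_eq_norm] using htri
  have hsym : ‖z - z'‖ = ‖z' - z‖ := norm_sub_rev z z'
  linarith
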